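/- Let A be a commutative ring and B an A-algebra such that the multiplication map B ⊗[A] B → B (sending b ⊗ b' to b·b') is bijective. Then the restriction-of-scalars functor from the category of B-modules to the category of A-modules (ModuleCat B ⥤ ModuleCat A) is fully faithful. -/

import Mathlib

open TensorProduct CategoryTheory

lemma zar_tmul_comm {A B : Type u} [CommRing A] [Ring B] [Algebra A B]
    (h : Function.Injective (LinearMap.mul' A B)) (b : B) :
    (b ⊗ₜ[A] (1 : B)) = ((1 : B) ⊗ₜ[A] b) := by
  apply h
  simp [LinearMap.mul'_apply]

/-- If the multiplication map `B ⊗[A] B → B` is bijective (underived formal noncommutative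
Zariski immersion), then the restriction-of-scalars functor
`ModuleCat B ⥤ ModuleCat A` is fully faithful. -/
theorem zariski_immersion_restrictScalars_fullyFaithful
    {A B : Type u} [CommRing A] [Ring B] [Algebra A B]
    (h : Function.Bijective (LinearMap.mul' A B)) :
    (ModuleCat.restrictScalars.{u} (algebraMap A B)).Full ∧
      (ModuleCat.restrictScalars.{u} (algebraMap A B)).Faithful := by
  refine ⟨⟨fun {M N} f => ?_⟩, inferInstance⟩
  have key : ∀ (b : B) (m : M), f (b • m) = b • f m := by
    intro b m
    let g : B → B → ((ModuleCat.restrictScalars.{u} (algebraMap A B)).obj N) :=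
      fun b b' => b • f (b' • m)
    have h1 : ∀ (b₁ b₂ b' : B), g (b₁ + b₂) b' = g b₁ b' + g b₂ b' :=
      fun b₁ b₂ b' => add_smul _ _ _
    have h2 : ∀ (a : A) (b b' : B), g (a • b) b' = a • g b b' := by
      intro a b b'
      simp only [g]
      rw [Algebra.smul_def, ModuleCat.restrictScalars.smul_def, mul_smul]
      rfl
    have h3 : ∀ (b b₁ b₂ : B), g b (b₁ + b₂) = g b b₁ + g b b₂ := by
      intro b b₁ b₂
      simp only [g, add_smul, map_add, smul_add]
      exact (congrArg (b • ·) (map_add (ConcreteCategory.hom f) (b₁ • m) (b₂ • m))).trans (smul_add _ _ _)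
    have h4 : ∀ (a : A) (b b' : B), g b (a • b') = a • g b b' := by
      intro a b b'
      simp only [g]
      rw [Algebra.smul_def, mul_smul, ← ModuleCat.restrictScalars.smul_def (algebraMap A B) a (b' • m)]
      rw [show (ConcreteCategory.hom f) (a • (show (ModuleCat.restrictScalars.{u} (algebraMap A B)).obj M from b' • m)) = a • (ConcreteCategory.hom f) (b' • m) from map_smul _ _ _]
      rw [ModuleCat.restrictScalars.smul_def, ModuleCat.restrictScalars.smul_def]
      change b • ((algebraMap A B) a • (ConcreteCategory.hom f) (b' • m)) = (algebraMap A B) a • b • (ConcreteCategory.hom f) (b' • m)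
      rw [smul_smul, smul_smul, Algebra.commutes]
    let φ : B →ₗ[A] B →ₗ[A] ((ModuleCat.restrictScalars.{u} (algebraMap A B)).obj N) :=
      LinearMap.mk₂ A g h1 h2 h3 h4
    have := congrArg (TensorProduct.lift φ) (zar_tmul_comm h.injective b)
    rw [TensorProduct.lift.tmul, TensorProduct.lift.tmul] at this
    have e1 : φ b 1 = b • f m := by
      simp only [φ, LinearMap.mk₂_apply, g, one_smul]
    have e2 : φ 1 b = f (b • m) := by
      simp only [φ, LinearMap.mk₂_apply, g, one_smul]
    rw [e1, e2] at this
    exact this.symm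
  exact ⟨ModuleCat.ofHom ⟨⟨f, (ConcreteCategory.hom f).map_add⟩, key⟩, rfl⟩
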